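/- For any neural code C ⊆ F_2^n, the set of maximal motifs of the polarized code C^p equals the set of polarizations of the maximal motifs of C: MaxMot(C^p) = {a^p : a ∈ MaxMot(C)}. -/

import Mathlib

open MvPolynomial

/-- The field with two elements. -/
abbrev F2 := ZMod 2

/-- A motif indexed by `ι`: at each index it is `0`, `1`, or `*` (represented by `none`). -/
abbrev Motif (ι : Type*) := ι → Option F2

/-- The partial order on motifs: `a ≤ b` iff `a i = b i` for every index `i` with `b i ≠ *`. -/
def MotifLE {ι : Type*} (a b : Motif ι) : Prop :=
  ∀ (i : ι) (x : F2), b i = some x → a i = some x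

/-- The variety of a motif: all words agreeing with the motif on its non-`*` coordinates. -/
def variety {ι : Type*} (a : Motif ι) : Set (ι → F2) :=
  {w | ∀ (i : ι) (x : F2), a i = some x → w i = x}

/-- `a` is a motif of the code `C` iff its variety is contained in `C`. -/
def IsMotifOf {ι : Type*} (C : Set (ι → F2)) (a : Motif ι) : Prop :=
  variety a ⊆ C

/-- The set of maximal motifs of a code `C`. -/
def maxMot {ι : Type*} (C : Set (ι → F2)) : Set (Motif ι) :=
  {a | IsMotifOf C a ∧ ∀ b : Motif ι, IsMotifOf C b → MotifLE a b → a = b}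

/-- Two motifs are disjoint if at some index both are non-`*` and they differ. -/
def DisjointMotifs {ι : Type*} (a b : Motif ι) : Prop :=
  ∃ (i : ι) (x : F2), a i = some x ∧ b i = some (1 - x)

/-- Polarization of a motif of length `n`, as a motif of length `2n`
(indexed by `Fin n ⊕ Fin n`; `Sum.inl i` is coordinate `i`, `Sum.inr i` is coordinate `n+i`). -/
def polMotif {n : ℕ} (a : Motif (Fin n)) : Motif (Fin n ⊕ Fin n)
  | Sum.inl i => if a i = some 0 then some 0 else none
  | Sum.inr i => if a i = some 1 then some 0 else none

/-- The bar of a motif: `0 ↦ 1`, `1 ↦ 0`, `* ↦ *`. -/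
def barMotif {ι : Type*} (a : Motif ι) : Motif ι :=
  fun i => (a i).map (fun x => 1 - x)

/-- The polarization of a code `C ⊆ F₂ⁿ`: the union of the varieties of the
polarizations of the maximal motifs of `C`. -/
def polCode {n : ℕ} (C : Set (Fin n → F2)) : Set ((Fin n ⊕ Fin n) → F2) :=
  ⋃ a ∈ maxMot C, variety (polMotif a)

/-- The code `over-over-D-p` : the union of the varieties of `bar (pol (bar b))`
over the maximal motifs `b` of `D`. -/
def barPolBarCode {n : ℕ} (D : Set (Fin n → F2)) : Set ((Fin n ⊕ Fin n) → F2) :=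
  ⋃ b ∈ maxMot D, variety (barMotif (polMotif (barMotif b)))

/-- The formal polarization of a code `C`: the complement of `barPolBarCode` of `Cᶜ`. -/
def formalPol {n : ℕ} (C : Set (Fin n → F2)) : Set ((Fin n ⊕ Fin n) → F2) :=
  (barPolBarCode Cᶜ)ᶜ

/-- The Lagrange polynomial of a motif. -/
noncomputable def lagrange {ι : Type*} [Fintype ι] (a : Motif ι) : MvPolynomial ι F2 :=
  (∏ i ∈ Finset.univ.filter (fun i => a i = some 1), X i) *
    ∏ j ∈ Finset.univ.filter (fun j => a j = some 0), (1 - X j)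

/-- The motif (with no stars) corresponding to a word. -/
def wordMotif {ι : Type*} (w : ι → F2) : Motif ι := fun i => some (w i)

/-- The neural ideal of a code: generated by the Lagrange polynomials of the
words in the complement of the code. -/
noncomputable def neuralIdeal {ι : Type*} [Fintype ι] (C : Set (ι → F2)) :
    Ideal (MvPolynomial ι F2) :=
  Ideal.span ((fun w => lagrange (wordMotif w)) '' Cᶜ)

/-- The pseudo-monomial `∏_{i ∈ σ} X i * ∏_{j ∈ τ} (1 - X j)`. -/
noncomputable def pm {ι : Type*} (σ τ : Finset ι) : MvPolynomial ι F2 :=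
  (∏ i ∈ σ, X i) * ∏ j ∈ τ, (1 - X j)

/-- A polynomial is a pseudo-monomial if it equals `pm σ τ` for disjoint `σ τ`. -/
def IsPseudoMonomial {ι : Type*} (f : MvPolynomial ι F2) : Prop :=
  ∃ σ τ : Finset ι, Disjoint σ τ ∧ f = pm σ τ

/-- The canonical form of an ideal: the set of its minimal pseudo-monomials, i.e.
pseudo-monomials `f ∈ I` such that no pseudo-monomial `g ∈ I` of strictly smaller
degree divides `f`. -/
def CF {ι : Type*} (I : Ideal (MvPolynomial ι F2)) : Set (MvPolynomial ι F2) :=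
  {f | IsPseudoMonomial f ∧ f ∈ I ∧
    ¬ ∃ g : MvPolynomial ι F2, IsPseudoMonomial g ∧ g ∈ I ∧
      g.totalDegree < f.totalDegree ∧ g ∣ f}

/-- The polarization of the pseudo-monomial with data `(σ, τ)`:
`∏_{i ∈ σ} X i * ∏_{j ∈ τ} Y j` (here `Y j = X (Sum.inr j)`). -/
noncomputable def ppm {n : ℕ} (σ τ : Finset (Fin n)) : MvPolynomial (Fin n ⊕ Fin n) F2 :=
  (∏ i ∈ σ, X (Sum.inl i)) * ∏ j ∈ τ, X (Sum.inr j)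

/-- `g` is the polarization of the pseudo-monomial `f`. -/
def PolPM {n : ℕ} (f : MvPolynomial (Fin n) F2) (g : MvPolynomial (Fin n ⊕ Fin n) F2) : Prop :=
  ∃ σ τ : Finset (Fin n), Disjoint σ τ ∧ f = pm σ τ ∧ g = ppm σ τ

/-- The set of polarizations of the elements of a set of pseudo-monomials. -/
def polSet {n : ℕ} (S : Set (MvPolynomial (Fin n) F2)) :
    Set (MvPolynomial (Fin n ⊕ Fin n) F2) :=
  {g | ∃ f ∈ S, PolPM f g}

/-- The prime ideal of a motif: generated by `X i` for `a i = 0`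
and `1 - X j` for `a j = 1`. -/
noncomputable def pIdeal {ι : Type*} (a : Motif ι) : Ideal (MvPolynomial ι F2) :=
  Ideal.span ({f | ∃ i, a i = some 0 ∧ f = X i} ∪ {f | ∃ j, a j = some 1 ∧ f = 1 - X j})

lemma motifLE_antisymm {ι : Type*} {a b : Motif ι} (h1 : MotifLE a b) (h2 : MotifLE b a) :
    a = b := by
  funext i
  cases hb : b i with
  | some x => exact h1 i x hb
  | none =>
    cases ha : a i with
    | none => rfl
    | some y => rw [h2 i y ha] at hb; exact absurd hb (by simp)

lemma exists_le_pol {n : ℕ} {C : Set (Fin n → F2)} {d : Motif (Fin n ⊕ Fin n)}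
    (hd : IsMotifOf (polCode C) d) :
    ∃ a ∈ maxMot C, MotifLE d (polMotif a) := by
  set w : (Fin n ⊕ Fin n) → F2 := fun j => (d j).getD 1 with hw
  have hwv : w ∈ variety d := fun j x hjx => by simp [hw, hjx]
  have hmem := hd hwv
  simp only [polCode, Set.mem_iUnion] at hmem
  obtain ⟨a, ha, hwa⟩ := hmem
  refine ⟨a, ha, fun j x hjx => ?_⟩
  have hx0 : x = 0 := by
    cases j with
    | inl i =>
      simp only [polMotif] at hjx
      split at hjx
      · exact (Option.some_inj.mp hjx).symm
      · exact absurd hjx (by simp)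
    | inr i =>
      simp only [polMotif] at hjx
      split at hjx
      · exact (Option.some_inj.mp hjx).symm
      · exact absurd hjx (by simp)
  have hwj : w j = x := hwa j x hjx
  cases hdj : d j with
  | some y =>
    have : w j = y := by simp [hw, hdj]
    rw [← this, hwj]
  | none =>
    have : w j = 1 := by simp [hw, hdj]
    rw [this, hx0] at hwj
    exact absurd hwj (by decide)

lemma pol_isMotifOf {n : ℕ} {C : Set (Fin n → F2)} {a : Motif (Fin n)} (ha : a ∈ maxMot C) :
    IsMotifOf (polCode C) (polMotif a) := by
  intro w hw
  simp only [polCode, Set.mem_iUnion]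
  exact ⟨a, ha, hw⟩

/-- `MaxMot (Cᵖ) = {aᵖ : a ∈ MaxMot C}`. -/
theorem maxMot_polCode {n : ℕ} (C : Set (Fin n → F2)) :
    maxMot (polCode C) = polMotif '' maxMot C := by
  ext d
  constructor
  · rintro ⟨hd, hmax⟩
    obtain ⟨a, ha, hle⟩ := exists_le_pol hd
    exact ⟨a, ha, (hmax _ (pol_isMotifOf ha) hle).symm⟩
  · rintro ⟨a, ha, rfl⟩
    refine ⟨pol_isMotifOf ha, fun e he hle => ?_⟩
    obtain ⟨b, hb, hle2⟩ := exists_le_pol he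
    have hcomp : MotifLE (polMotif a) (polMotif b) :=
      fun j y hy => hle j y (hle2 j y hy)
    have hab : MotifLE a b := by
      intro i x hbx
      have hx : x = 0 ∨ x = 1 := by fin_cases x; exacts [Or.inl rfl, Or.inr rfl]
      rcases hx with rfl | rfl
      · have hpb : polMotif b (Sum.inl i) = some 0 := by simp [polMotif, hbx]
        have hpa := hcomp _ _ hpb
        simp only [polMotif] at hpa
        split at hpa
        · assumption
        · exact absurd hpa (by simp)
      · have hpb : polMotif b (Sum.inr i) = some 0 := by simp [polMotif, hbx]
        have hpa := hcomp _ _ hpb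
        simp only [polMotif] at hpa
        split at hpa
        · assumption
        · exact absurd hpa (by simp)
    have hba : a = b := ha.2 b hb.1 hab
    subst hba
    exact motifLE_antisymm hle hle2
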